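/- Let p be a PDB over a finite set T = {u_0, u_1, …, u_k} of distinct tuples with k ≥ 2, and let the conflict hypergraph be the path graph E = { {u_i, u_{i+1}} : 0 ≤ i ≤ k−1 }. Assume the PDB is consistent w.r.t. E. Then p^max({u_0, u_k}) = min{ p(u_0), p(u_k), 1 − (p(u_1) + p(u_{k−1}) − p^max({u_1, u_{k−1}})) }. -/

import Mathlib

open Finset

variable {τ : Type*} [Fintype τ] [DecidableEq τ]

/-- An interpretation of a PDB `p`: a probability distribution over possible worlds
(subsets of the set of tuples) whose marginals agree with `p`. -/
def IsInterp (p : τ → ℝ) (Pr : Finset τ → ℝ) : Prop :=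
  (∀ w, 0 ≤ Pr w) ∧ (∑ w : Finset τ, Pr w = 1) ∧
  (∀ t : τ, ∑ w ∈ Finset.univ.filter (fun w => t ∈ w), Pr w = p t)

/-- A model of the PDB `p` w.r.t. the hyperedge set `E`: an interpretation assigning
probability 0 to every world containing some hyperedge of `E`. -/
def IsModel (p : τ → ℝ) (E : Set (Finset τ)) (Pr : Finset τ → ℝ) : Prop :=
  IsInterp p Pr ∧ ∀ w : Finset τ, (∃ e ∈ E, e ⊆ w) → Pr w = 0

/-- The PDB `p` is consistent w.r.t. `E` if a model exists. -/
def Consistent (p : τ → ℝ) (E : Set (Finset τ)) : Prop :=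
  ∃ Pr, IsModel p E Pr

/-- The probability, under `Pr`, that all tuples of `S` co-exist. -/
def coexistProb (Pr : Finset τ → ℝ) (S : Finset τ) : ℝ :=
  ∑ w ∈ Finset.univ.filter (fun w => S ⊆ w), Pr w


omit [Fintype τ] in
lemma sdiff_pair_self {a b : τ} {v : Finset τ} (hav : a ∉ v) (hbv : b ∉ v) :
    v \ {a, b} = v := by
  ext t
  simp only [mem_sdiff, mem_insert, mem_singleton]
  constructor
  · exact fun h => h.1
  · intro h
    refine ⟨h, ?_⟩
    rintro (rfl | rfl)
    · exact hav h
    · exact hbv h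

omit [Fintype τ] in
lemma sdiff_pair_insert_left {a b : τ} {v : Finset τ} (hav : a ∉ v) (hbv : b ∉ v) :
    insert a v \ {a, b} = v := by
  ext t
  simp only [mem_sdiff, mem_insert, mem_singleton]
  constructor
  · rintro ⟨rfl | h, hn⟩
    · exact absurd (Or.inl rfl) hn
    · exact h
  · intro h
    refine ⟨Or.inr h, ?_⟩
    rintro (rfl | rfl)
    · exact hav h
    · exact hbv h

omit [Fintype τ] in
lemma sdiff_pair_insert_right {a b : τ} {v : Finset τ} (hav : a ∉ v) (hbv : b ∉ v) :
    insert b v \ {a, b} = v := by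
  ext t
  simp only [mem_sdiff, mem_insert, mem_singleton]
  constructor
  · rintro ⟨rfl | h, hn⟩
    · exact absurd (Or.inr rfl) hn
    · exact h
  · intro h
    refine ⟨Or.inr h, ?_⟩
    rintro (rfl | rfl)
    · exact hav h
    · exact hbv h

omit [Fintype τ] in
lemma sdiff_pair_insert_both {a b : τ} {v : Finset τ} (hav : a ∉ v) (hbv : b ∉ v) :
    insert a (insert b v) \ {a, b} = v := by
  ext t
  simp only [mem_sdiff, mem_insert, mem_singleton]
  constructor
  · rintro ⟨rfl | rfl | h, hn⟩
    · exact absurd (Or.inl rfl) hn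
    · exact absurd (Or.inr rfl) hn
    · exact h
  · intro h
    refine ⟨Or.inr (Or.inr h), ?_⟩
    rintro (rfl | rfl)
    · exact hav h
    · exact hbv h

lemma fiber_pair_eq {a b : τ} (hab : a ≠ b) (v : Finset τ) (hav : a ∉ v) (hbv : b ∉ v) :
    univ.filter (fun x : Finset τ => x \ {a, b} = v)
      = {v, insert a v, insert b v, insert a (insert b v)} := by
  ext x
  simp only [mem_filter, mem_univ, true_and, mem_insert, mem_singleton]
  constructor
  · intro hx
    have hmem : ∀ t, t ∈ x ↔ ((t = a ∧ a ∈ x) ∨ (t = b ∧ b ∈ x) ∨ t ∈ v) := by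
      intro t
      rw [← hx]
      simp only [mem_sdiff, mem_insert, mem_singleton]
      by_cases ta : t = a
      · subst ta; tauto
      · by_cases tb : t = b
        · subst tb; tauto
        · tauto
    by_cases hA : a ∈ x <;> by_cases hB : b ∈ x
    · refine Or.inr (Or.inr (Or.inr ?_))
      ext t; rw [hmem t]; simp [mem_insert, hA, hB]
    · refine Or.inr (Or.inl ?_)
      ext t; rw [hmem t]; simp [mem_insert, hA, hB]
    · refine Or.inr (Or.inr (Or.inl ?_))
      ext t; rw [hmem t]; simp [mem_insert, hA, hB]
    · refine Or.inl ?_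
      ext t; rw [hmem t]; simp [hA, hB]
  · rintro (rfl | rfl | rfl | rfl)
    · exact sdiff_pair_self hav hbv
    · exact sdiff_pair_insert_left hav hbv
    · exact sdiff_pair_insert_right hav hbv
    · exact sdiff_pair_insert_both hav hbv

lemma sum_four_worlds {a b : τ} (hab : a ≠ b) (v : Finset τ) (hav : a ∉ v) (hbv : b ∉ v)
    (f : Finset τ → ℝ) :
    ∑ x ∈ ({v, insert a v, insert b v, insert a (insert b v)} : Finset (Finset τ)), f x
      = f v + f (insert a v) + f (insert b v) + f (insert a (insert b v)) := by
  have e1 : v ≠ insert a v := by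
    intro h; apply hav; rw [h]; exact mem_insert_self a v
  have e2 : v ≠ insert b v := by
    intro h; apply hbv; rw [h]; exact mem_insert_self b v
  have e3 : v ≠ insert a (insert b v) := by
    intro h; apply hav; rw [h]; exact mem_insert_self a _
  have e4 : insert a v ≠ insert b v := by
    intro h
    have : a ∈ insert b v := by rw [← h]; exact mem_insert_self a v
    rcases mem_insert.mp this with h' | h'
    · exact hab h'
    · exact hav h'
  have e5 : insert a v ≠ insert a (insert b v) := by
    intro h
    have : b ∈ insert a v := by rw [h]; exact mem_insert_of_mem (mem_insert_self b v)
    rcases mem_insert.mp this with h' | h'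
    · exact hab h'.symm
    · exact hbv h'
  have e6 : insert b v ≠ insert a (insert b v) := by
    intro h
    have : a ∈ insert b v := by rw [h]; exact mem_insert_self a _
    rcases mem_insert.mp this with h' | h'
    · exact hab h'
    · exact hav h'
  rw [Finset.sum_insert (by simp [e1, e2, e3]),
      Finset.sum_insert (by simp [e4, e5]),
      Finset.sum_insert (by simp [e6]),
      Finset.sum_singleton]
  ring

lemma master_sum {a b : τ} (Pr1 G : Finset τ → ℝ) :
    ∑ w : Finset τ, G w * (∑ w' ∈ univ.filter (fun w' => w' \ {a, b} = w \ {a, b}), Pr1 w')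
      = ∑ w' : Finset τ, Pr1 w' * ∑ x ∈ univ.filter (fun x => x \ {a, b} = w' \ {a, b}), G x := by
  simp only [Finset.sum_filter, Finset.mul_sum]
  rw [Finset.sum_comm]
  apply Finset.sum_congr rfl
  intro w' _
  apply Finset.sum_congr rfl
  intro w _
  by_cases h : w \ {a, b} = w' \ {a, b}
  · rw [if_pos h, if_pos h.symm]; ring
  · rw [if_neg h, if_neg (fun h' => h h'.symm)]; simp
noncomputable def coefF (a b c d : τ) (γ α β a01 b10 : ℝ) [DecidableEq τ] (w : Finset τ) : ℝ :=
  if a ∈ w then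
    if c ∈ w then 0
    else if b ∈ w then (if d ∈ w then 0 else γ)
    else if d ∈ w then a01 else α
  else if b ∈ w then
    if d ∈ w then 0 else if c ∈ w then b10 else β
  else
    if c ∈ w then (if d ∈ w then 1 else 1 - b10)
    else if d ∈ w then 1 - a01 else 1 - γ - α - β

lemma pair_le_one (p : τ → ℝ) (E : Set (Finset τ)) (Pr1 : Finset τ → ℝ)
    (h1 : IsModel p E Pr1) (x y : τ) (hxy : ({x, y} : Finset τ) ∈ E) :
    p x + p y ≤ 1 := by
  obtain ⟨⟨h1nn, h1tot, h1marg⟩, h1edge⟩ := h1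
  have h : ∀ w : Finset τ, (if x ∈ w then Pr1 w else 0) + (if y ∈ w then Pr1 w else 0) ≤ Pr1 w := by
    intro w
    by_cases hX : x ∈ w <;> by_cases hY : y ∈ w
    · have h0 : Pr1 w = 0 := h1edge w ⟨{x, y}, hxy, by simp [insert_subset_iff, hX, hY]⟩
      simp [hX, hY, h0]
    all_goals simp [hX, hY, h1nn w]
  calc p x + p y
      = ∑ w : Finset τ, ((if x ∈ w then Pr1 w else 0) + (if y ∈ w then Pr1 w else 0)) := by
        rw [Finset.sum_add_distrib, ← Finset.sum_filter, ← Finset.sum_filter,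
          h1marg x, h1marg y]
    _ ≤ ∑ w : Finset τ, Pr1 w := Finset.sum_le_sum (fun w _ => h w)
    _ = 1 := h1tot
lemma exists_opt_model (p : τ → ℝ) (E : Set (Finset τ)) (a b c d : τ)
    (hab : a ≠ b) (hac : a ≠ c) (had : a ≠ d) (hbc : b ≠ c) (hbd : b ≠ d)
    (hEa : ∀ e ∈ E, a ∈ e → e = {a, c}) (hEb : ∀ e ∈ E, b ∈ e → e = {d, b})
    (hacE : ({a, c} : Finset τ) ∈ E) (hdbE : ({d, b} : Finset τ) ∈ E)
    (Pr1 : Finset τ → ℝ) (h1 : IsModel p E Pr1) :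
    ∃ Pr2, IsModel p E Pr2 ∧
      coexistProb Pr2 {a, b} =
        min (p a) (min (p b) (1 - (p c + p d - coexistProb Pr1 {c, d}))) := by
  have hpa1 : p a + p c ≤ 1 := pair_le_one p E Pr1 h1 a c hacE
  have hpb1 : p b + p d ≤ 1 := by
    have := pair_le_one p E Pr1 h1 d b hdbE; linarith
  obtain ⟨⟨h1nn, h1tot, h1marg⟩, h1edge⟩ := h1
  have hpnn : ∀ t, 0 ≤ p t := by
    intro t; rw [← h1marg t]; exact Finset.sum_nonneg (fun w _ => h1nn w)
  set q : ℝ := coexistProb Pr1 {c, d} with hqdef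
  set S11 : ℝ := ∑ w ∈ univ.filter (fun w => c ∈ w ∧ d ∈ w), Pr1 w with hS11def
  set S10 : ℝ := ∑ w ∈ univ.filter (fun w => c ∈ w ∧ d ∉ w), Pr1 w with hS10def
  set S01 : ℝ := ∑ w ∈ univ.filter (fun w => c ∉ w ∧ d ∈ w), Pr1 w with hS01def
  set S00 : ℝ := ∑ w ∈ univ.filter (fun w => c ∉ w ∧ d ∉ w), Pr1 w with hS00def
  have hq11 : q = S11 := by
    rw [hqdef, hS11def]
    unfold coexistProb
    exact Finset.sum_congr (by ext w; simp [Finset.insert_subset_iff]) (fun _ _ => rfl)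
  have hSc : S11 + S10 = p c := by
    rw [← h1marg c, hS11def, hS10def, Finset.sum_filter, Finset.sum_filter,
      Finset.sum_filter, ← Finset.sum_add_distrib]
    apply Finset.sum_congr rfl
    intro w _
    by_cases hcw : c ∈ w <;> by_cases hdw : d ∈ w <;> simp [hcw, hdw]
  have hSd : S11 + S01 = p d := by
    rw [← h1marg d, hS11def, hS01def, Finset.sum_filter, Finset.sum_filter,
      Finset.sum_filter, ← Finset.sum_add_distrib]
    apply Finset.sum_congr rfl
    intro w _
    by_cases hcw : c ∈ w <;> by_cases hdw : d ∈ w <;> simp [hcw, hdw]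
  have hStot : S11 + S10 + S01 + S00 = 1 := by
    rw [← h1tot, hS11def, hS10def, hS01def, hS00def, Finset.sum_filter, Finset.sum_filter,
      Finset.sum_filter, Finset.sum_filter, ← Finset.sum_add_distrib, ← Finset.sum_add_distrib,
      ← Finset.sum_add_distrib]
    apply Finset.sum_congr rfl
    intro w _
    by_cases hcw : c ∈ w <;> by_cases hdw : d ∈ w <;> simp [hcw, hdw]
  have hS10nn : 0 ≤ S10 := Finset.sum_nonneg (fun w _ => h1nn w)
  have hS01nn : 0 ≤ S01 := Finset.sum_nonneg (fun w _ => h1nn w)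
  have hS00nn : 0 ≤ S00 := Finset.sum_nonneg (fun w _ => h1nn w)
  have hS11nn : 0 ≤ S11 := Finset.sum_nonneg (fun w _ => h1nn w)
  set A : ℝ := 1 - p c - p d + q with hAdef
  have hS00A : S00 = A := by rw [hAdef]; linarith
  have hS10v : S10 = p c - q := by linarith
  have hS01v : S01 = p d - q := by linarith
  have hAnn : 0 ≤ A := hS00A ▸ hS00nn
  have hD01nn : 0 ≤ p d - q := hS01v ▸ hS01nn
  have hD10nn : 0 ≤ p c - q := hS10v ▸ hS10nn
  set m : ℝ := min (p a) (min (p b) A) with hmdef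
  have hm0 : 0 ≤ m := le_min (hpnn a) (le_min (hpnn b) hAnn)
  have hma : m ≤ p a := min_le_left _ _
  have hmb : m ≤ p b := le_trans (min_le_right _ _) (min_le_left _ _)
  have hmA : m ≤ A := le_trans (min_le_right _ _) (min_le_right _ _)
  set x01 : ℝ := min (p a - m) (p d - q) with hx01def
  set x10 : ℝ := min (p b - m) (p c - q) with hx10def
  have hx01nn : 0 ≤ x01 := le_min (by linarith) hD01nn
  have hx01a : x01 ≤ p a - m := min_le_left _ _
  have hx01D : x01 ≤ p d - q := min_le_right _ _
  have hx10nn : 0 ≤ x10 := le_min (by linarith) hD10nn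
  have hx10b : x10 ≤ p b - m := min_le_left _ _
  have hx10D : x10 ≤ p c - q := min_le_right _ _
  -- the key inequality
  have hK : m + (p a - m - x01) + (p b - m - x10) ≤ A := by
    rcases le_total (p a) (min (p b) A) with h | h
    · have hm' : m = p a := by rw [hmdef, min_eq_left h]
      have hx01' : x01 = 0 := by
        rw [hx01def, hm']
        simp only [sub_self]
        exact min_eq_left hD01nn
      rcases le_total (p b - m) (p c - q) with h2 | h2
      · have : x10 = p b - m := by rw [hx10def, min_eq_left h2]
        have hmA' : m ≤ A := hmA
        linarith
      · have : x10 = p c - q := by rw [hx10def, min_eq_right h2]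
        rw [hAdef] at *
        linarith
    · have hm' : m = min (p b) A := by rw [hmdef, min_eq_right h]
      rcases le_total (p b) A with h3 | h3
      · have hm'' : m = p b := by rw [hm', min_eq_left h3]
        have hx10' : x10 = 0 := by
          rw [hx10def, hm'']
          simp only [sub_self]
          exact min_eq_left hD10nn
        rcases le_total (p a - m) (p d - q) with h2 | h2
        · have : x01 = p a - m := by rw [hx01def, min_eq_left h2]
          linarith
        · have : x01 = p d - q := by rw [hx01def, min_eq_right h2]
          rw [hAdef] at *
          linarith
      · have hm'' : m = A := by rw [hm', min_eq_right h3]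
        have hx01' : x01 = p a - m := by
          rw [hx01def, min_eq_left ?_]
          rw [hm'', hAdef]
          linarith
        have hx10' : x10 = p b - m := by
          rw [hx10def, min_eq_left ?_]
          rw [hm'', hAdef]
          linarith
        linarith
  have hA0m : A = 0 → m = 0 := fun h => le_antisymm (h ▸ hmA) hm0
  set γ : ℝ := if A = 0 then 0 else m / A with hγdef
  set α : ℝ := if A = 0 then 0 else (p a - m - x01) / A with hαdef
  set β : ℝ := if A = 0 then 0 else (p b - m - x10) / A with hβdef
  set a01 : ℝ := if p d - q = 0 then 0 else x01 / (p d - q) with ha01def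
  set b10 : ℝ := if p c - q = 0 then 0 else x10 / (p c - q) with hb10def
  have hApos : A ≠ 0 → 0 < A := fun h => lt_of_le_of_ne hAnn (Ne.symm h)
  have hγA : γ * A = m := by
    by_cases h : A = 0
    · rw [hγdef, if_pos h, h, hA0m h]; ring
    · rw [hγdef, if_neg h]; field_simp
  have hαA : α * A = p a - m - x01 := by
    by_cases h : A = 0
    · have hm' := hA0m h
      have : x01 = p a - m := by
        rw [hx01def]
        apply min_eq_left
        rw [hAdef] at h
        linarith
      rw [hαdef, if_pos h, h, this]; ring
    · rw [hαdef, if_neg h]; field_simp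
  have hβA : β * A = p b - m - x10 := by
    by_cases h : A = 0
    · have hm' := hA0m h
      have : x10 = p b - m := by
        rw [hx10def]
        apply min_eq_left
        rw [hAdef] at h
        linarith
      rw [hβdef, if_pos h, h, this]; ring
    · rw [hβdef, if_neg h]; field_simp
  have ha01D : a01 * (p d - q) = x01 := by
    by_cases h : p d - q = 0
    · have : x01 = 0 := le_antisymm (h ▸ hx01D) hx01nn
      rw [ha01def, if_pos h, this]; ring
    · rw [ha01def, if_neg h]; field_simp
  have hb10D : b10 * (p c - q) = x10 := by
    by_cases h : p c - q = 0
    · have : x10 = 0 := le_antisymm (h ▸ hx10D) hx10nn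
      rw [hb10def, if_pos h, this]; ring
    · rw [hb10def, if_neg h]; field_simp
  have hγnn : 0 ≤ γ := by
    by_cases h : A = 0
    · rw [hγdef, if_pos h]
    · rw [hγdef, if_neg h]; exact div_nonneg hm0 hAnn
  have hαnn : 0 ≤ α := by
    by_cases h : A = 0
    · rw [hαdef, if_pos h]
    · rw [hαdef, if_neg h]; exact div_nonneg (by linarith) hAnn
  have hβnn : 0 ≤ β := by
    by_cases h : A = 0
    · rw [hβdef, if_pos h]
    · rw [hβdef, if_neg h]; exact div_nonneg (by linarith) hAnn
  have ha01nn : 0 ≤ a01 := by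
    by_cases h : p d - q = 0
    · rw [ha01def, if_pos h]
    · rw [ha01def, if_neg h]; exact div_nonneg hx01nn hD01nn
  have hb10nn : 0 ≤ b10 := by
    by_cases h : p c - q = 0
    · rw [hb10def, if_pos h]
    · rw [hb10def, if_neg h]; exact div_nonneg hx10nn hD10nn
  have ha01le : a01 ≤ 1 := by
    by_cases h : p d - q = 0
    · rw [ha01def, if_pos h]; norm_num
    · rw [ha01def, if_neg h]
      rw [div_le_one (lt_of_le_of_ne hD01nn (Ne.symm h))]
      exact hx01D
  have hb10le : b10 ≤ 1 := by
    by_cases h : p c - q = 0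
    · rw [hb10def, if_pos h]; norm_num
    · rw [hb10def, if_neg h]
      rw [div_le_one (lt_of_le_of_ne hD10nn (Ne.symm h))]
      exact hx10D
  have hsumle : γ + α + β ≤ 1 := by
    by_cases h : A = 0
    · rw [hγdef, hαdef, hβdef, if_pos h, if_pos h, if_pos h]; norm_num
    · have hA' := hApos h
      rw [hγdef, hαdef, hβdef, if_neg h, if_neg h, if_neg h, ← add_div,
        ← add_div, div_le_one hA']
      linarith
  set C : Finset τ → ℝ := coefF a b c d γ α β a01 b10 with hCdef
  have hCnn : ∀ w, 0 ≤ C w := by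
    intro w
    rw [hCdef]
    unfold coefF
    split_ifs <;> linarith
  have hfour : ∀ v : Finset τ, a ∉ v → b ∉ v →
      C v + C (insert a v) + C (insert b v) + C (insert a (insert b v)) = 1 := by
    intro v hav hbv
    by_cases hcv : c ∈ v <;> by_cases hdv : d ∈ v <;>
      simp [hCdef, coefF, Finset.mem_insert, hav, hbv, hab, Ne.symm hab, Ne.symm hac,
        Ne.symm had, Ne.symm hbc, Ne.symm hbd, hcv, hdv] <;> ring
  set ν : Finset τ → ℝ := fun v => ∑ w' ∈ univ.filter (fun w' => w' \ {a, b} = v), Pr1 w' with hνdef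
  have hνnn : ∀ v, 0 ≤ ν v := fun v => Finset.sum_nonneg (fun w _ => h1nn w)
  set Pr2 : Finset τ → ℝ := fun w => C w * ν (w \ {a, b}) with hPr2def
  have hmain : ∀ (Q : Finset τ → Prop) (_ : DecidablePred Q),
      ∑ w ∈ univ.filter Q, Pr2 w
        = ∑ w' : Finset τ, Pr1 w' *
            ∑ x ∈ univ.filter (fun x => x \ {a, b} = w' \ {a, b}), (if Q x then C x else 0) := by
    intro Q _
    rw [Finset.sum_filter]
    calc ∑ w : Finset τ, (if Q w then Pr2 w else 0)
        = ∑ w : Finset τ, (if Q w then C w else 0) * ν (w \ {a, b}) :=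
          Finset.sum_congr rfl (fun w _ => by by_cases h : Q w <;> simp [h, hPr2def])
      _ = _ := by
          simp only [hνdef]
          exact master_sum Pr1 (fun w => if Q w then C w else 0)
  have houter : ∀ r11 r10 r01 r00 : ℝ,
      (∑ w' : Finset τ, Pr1 w' *
        (if c ∈ w' then (if d ∈ w' then r11 else r10) else (if d ∈ w' then r01 else r00)))
      = S11 * r11 + S10 * r10 + S01 * r01 + S00 * r00 := by
    intro r11 r10 r01 r00
    calc (∑ w' : Finset τ, Pr1 w' *
        (if c ∈ w' then (if d ∈ w' then r11 else r10) else (if d ∈ w' then r01 else r00)))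
        = ∑ w' : Finset τ,
            ((if c ∈ w' ∧ d ∈ w' then Pr1 w' else 0) * r11
            + (if c ∈ w' ∧ d ∉ w' then Pr1 w' else 0) * r10
            + (if c ∉ w' ∧ d ∈ w' then Pr1 w' else 0) * r01
            + (if c ∉ w' ∧ d ∉ w' then Pr1 w' else 0) * r00) := by
          apply Finset.sum_congr rfl
          intro w _
          by_cases hcw : c ∈ w <;> by_cases hdw : d ∈ w <;> simp [hcw, hdw]
      _ = S11 * r11 + S10 * r10 + S01 * r01 + S00 * r00 := by
          rw [Finset.sum_add_distrib, Finset.sum_add_distrib, Finset.sum_add_distrib,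
            ← Finset.sum_mul, ← Finset.sum_mul, ← Finset.sum_mul, ← Finset.sum_mul,
            ← Finset.sum_filter, ← Finset.sum_filter, ← Finset.sum_filter, ← Finset.sum_filter,
            hS11def, hS10def, hS01def, hS00def]
  have hsdiff : ∀ w' : Finset τ, a ∉ w' \ {a, b} ∧ b ∉ w' \ {a, b} := by
    intro w'; constructor <;> simp
  have hinner : ∀ (Q : Finset τ → Prop) (_ : DecidablePred Q) (w' : Finset τ),
      ∑ x ∈ univ.filter (fun x => x \ {a, b} = w' \ {a, b}), (if Q x then C x else 0)
        = (if Q (w' \ {a, b}) then C (w' \ {a, b}) else 0)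
          + (if Q (insert a (w' \ {a, b})) then C (insert a (w' \ {a, b})) else 0)
          + (if Q (insert b (w' \ {a, b})) then C (insert b (w' \ {a, b})) else 0)
          + (if Q (insert a (insert b (w' \ {a, b}))) then C (insert a (insert b (w' \ {a, b}))) else 0) := by
    intro Q _ w'
    rw [fiber_pair_eq hab _ (hsdiff w').1 (hsdiff w').2,
      sum_four_worlds hab _ (hsdiff w').1 (hsdiff w').2]
  have htot2 : ∑ w : Finset τ, Pr2 w = 1 := by
    have hu : (univ : Finset (Finset τ)) = univ.filter (fun _ => True) := by simp
    rw [hu, hmain _ (fun _ => instDecidableTrue)]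
    have ev : ∀ w' : Finset τ,
        (∑ x ∈ univ.filter (fun x => x \ {a, b} = w' \ {a, b}),
          (if True then C x else 0)) = 1 := by
      intro w'
      rw [hinner _ (fun _ => instDecidableTrue) w']
      simp only [if_true]
      exact hfour _ (hsdiff w').1 (hsdiff w').2
    calc (∑ w' : Finset τ, Pr1 w' * ∑ x ∈ univ.filter (fun x => x \ {a, b} = w' \ {a, b}),
          (if True then C x else 0))
        = ∑ w' : Finset τ, Pr1 w' * 1 := Finset.sum_congr rfl (fun w' _ => by rw [ev w'])
      _ = 1 := by simp only [mul_one]; exact h1tot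
  have hmarg_a : ∑ w ∈ univ.filter (fun w => a ∈ w), Pr2 w = p a := by
    rw [hmain _ (fun w => Finset.decidableMem a w)]
    have ev : ∀ w' : Finset τ,
        (∑ x ∈ univ.filter (fun x => x \ {a, b} = w' \ {a, b}), (if a ∈ x then C x else 0))
        = (if c ∈ w' then (if d ∈ w' then 0 else 0) else (if d ∈ w' then a01 else α + γ)) := by
      intro w'
      rw [hinner _ (fun w => Finset.decidableMem a w) w']
      by_cases hcw : c ∈ w' <;> by_cases hdw : d ∈ w' <;>
        simp [hCdef, coefF, Finset.mem_insert, Finset.mem_sdiff, Finset.mem_singleton,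
          hab, Ne.symm hab, Ne.symm hac, Ne.symm had, Ne.symm hbc, Ne.symm hbd, hcw, hdw] <;>
        ring
    calc (∑ w' : Finset τ, Pr1 w' * ∑ x ∈ univ.filter (fun x => x \ {a, b} = w' \ {a, b}),
          (if a ∈ x then C x else 0))
        = ∑ w' : Finset τ, Pr1 w' *
            (if c ∈ w' then (if d ∈ w' then 0 else 0) else (if d ∈ w' then a01 else α + γ)) :=
          Finset.sum_congr rfl (fun w' _ => by rw [ev w'])
      _ = S11 * 0 + S10 * 0 + S01 * a01 + S00 * (α + γ) := houter 0 0 a01 (α + γ)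
      _ = p a := by
          rw [hS01v, hS00A]
          linear_combination ha01D + hαA + hγA
  have hmarg_b : ∑ w ∈ univ.filter (fun w => b ∈ w), Pr2 w = p b := by
    rw [hmain _ (fun w => Finset.decidableMem b w)]
    have ev : ∀ w' : Finset τ,
        (∑ x ∈ univ.filter (fun x => x \ {a, b} = w' \ {a, b}), (if b ∈ x then C x else 0))
        = (if c ∈ w' then (if d ∈ w' then 0 else b10) else (if d ∈ w' then 0 else β + γ)) := by
      intro w'
      rw [hinner _ (fun w => Finset.decidableMem b w) w']
      by_cases hcw : c ∈ w' <;> by_cases hdw : d ∈ w' <;>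
        simp [hCdef, coefF, Finset.mem_insert, Finset.mem_sdiff, Finset.mem_singleton,
          hab, Ne.symm hab, Ne.symm hac, Ne.symm had, Ne.symm hbc, Ne.symm hbd, hcw, hdw] <;>
        ring
    calc (∑ w' : Finset τ, Pr1 w' * ∑ x ∈ univ.filter (fun x => x \ {a, b} = w' \ {a, b}),
          (if b ∈ x then C x else 0))
        = ∑ w' : Finset τ, Pr1 w' *
            (if c ∈ w' then (if d ∈ w' then 0 else b10) else (if d ∈ w' then 0 else β + γ)) :=
          Finset.sum_congr rfl (fun w' _ => by rw [ev w'])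
      _ = S11 * 0 + S10 * b10 + S01 * 0 + S00 * (β + γ) := houter 0 b10 0 (β + γ)
      _ = p b := by
          rw [hS10v, hS00A]
          linear_combination hb10D + hβA + hγA
  have hmarg_t : ∀ t : τ, t ≠ a → t ≠ b →
      ∑ w ∈ univ.filter (fun w => t ∈ w), Pr2 w = p t := by
    intro t hta htb
    rw [hmain _ (fun w => Finset.decidableMem t w)]
    have ev : ∀ w' : Finset τ,
        (∑ x ∈ univ.filter (fun x => x \ {a, b} = w' \ {a, b}), (if t ∈ x then C x else 0))
        = (if t ∈ w' then 1 else 0) := by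
      intro w'
      rw [hinner _ (fun w => Finset.decidableMem t w) w']
      have hmem : t ∈ w' \ {a, b} ↔ t ∈ w' := by
        simp [Finset.mem_sdiff, Finset.mem_insert, Finset.mem_singleton, hta, htb]
      by_cases htw : t ∈ w'
      · have h0 : t ∈ w' \ {a, b} := hmem.mpr htw
        rw [if_pos h0, if_pos (Finset.mem_insert_of_mem h0),
          if_pos (Finset.mem_insert_of_mem h0),
          if_pos (Finset.mem_insert_of_mem (Finset.mem_insert_of_mem h0)), if_pos htw]
        exact hfour _ (hsdiff w').1 (hsdiff w').2
      · have h0 : t ∉ w' \ {a, b} := fun h => htw (hmem.mp h)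
        have h1' : t ∉ insert a (w' \ {a, b}) := by
          simp only [Finset.mem_insert]; rintro (rfl | h); exact hta rfl; exact h0 h
        have h2' : t ∉ insert b (w' \ {a, b}) := by
          simp only [Finset.mem_insert]; rintro (rfl | h); exact htb rfl; exact h0 h
        have h3' : t ∉ insert a (insert b (w' \ {a, b})) := by
          simp only [Finset.mem_insert]; rintro (rfl | rfl | h)
          · exact hta rfl
          · exact htb rfl
          · exact h0 h
        rw [if_neg h0, if_neg h1', if_neg h2', if_neg h3', if_neg htw]; ring
    calc (∑ w' : Finset τ, Pr1 w' * ∑ x ∈ univ.filter (fun x => x \ {a, b} = w' \ {a, b}),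
          (if t ∈ x then C x else 0))
        = ∑ w' : Finset τ, Pr1 w' * (if t ∈ w' then 1 else 0) :=
          Finset.sum_congr rfl (fun w' _ => by rw [ev w'])
      _ = p t := by
          rw [← h1marg t, Finset.sum_filter]
          apply Finset.sum_congr rfl
          intro w _
          by_cases h : t ∈ w <;> simp [h]
  have hPr2edge : ∀ w : Finset τ, (∃ e ∈ E, e ⊆ w) → Pr2 w = 0 := by
    rintro w ⟨e, he, hew⟩
    by_cases hA : a ∈ e
    · have he' := hEa e he hA
      have haw : a ∈ w := hew hA
      have hcw : c ∈ w := hew (by rw [he']; exact Finset.mem_insert_of_mem (Finset.mem_singleton_self c))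
      have hC0 : C w = 0 := by
        rw [hCdef]; unfold coefF; rw [if_pos haw, if_pos hcw]
      simp [hPr2def, hC0]
    · by_cases hB : b ∈ e
      · have he' := hEb e he hB
        have hbw : b ∈ w := hew hB
        have hdw : d ∈ w := hew (by rw [he']; exact Finset.mem_insert_self d _)
        have hC0 : C w = 0 := by
          rw [hCdef]; unfold coefF
          by_cases haw : a ∈ w <;> by_cases hcw : c ∈ w <;> simp [haw, hcw, hbw, hdw]
        simp [hPr2def, hC0]
      · have hν0 : ν (w \ {a, b}) = 0 := by
          simp only [hνdef]
          apply Finset.sum_eq_zero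
          intro w'' hw''
          simp only [Finset.mem_filter, Finset.mem_univ, true_and] at hw''
          apply h1edge
          refine ⟨e, he, ?_⟩
          intro t ht
          have htw : t ∈ w \ {a, b} := by
            simp only [Finset.mem_sdiff, Finset.mem_insert, Finset.mem_singleton]
            refine ⟨hew ht, ?_⟩
            rintro (rfl | rfl)
            · exact hA ht
            · exact hB ht
          rw [← hw''] at htw
          exact (Finset.mem_sdiff.mp htw).1
        simp [hPr2def, hν0]
  have hco : coexistProb Pr2 {a, b} = m := by
    unfold coexistProb
    have hfe : univ.filter (fun w : Finset τ => ({a, b} : Finset τ) ⊆ w)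
        = univ.filter (fun w => a ∈ w ∧ b ∈ w) := by
      ext w; simp [Finset.insert_subset_iff]
    rw [hfe, hmain _ (fun w => instDecidableAnd)]
    have ev : ∀ w' : Finset τ,
        (∑ x ∈ univ.filter (fun x => x \ {a, b} = w' \ {a, b}),
          (if a ∈ x ∧ b ∈ x then C x else 0))
        = (if c ∈ w' then (if d ∈ w' then 0 else 0) else (if d ∈ w' then 0 else γ)) := by
      intro w'
      rw [hinner _ (fun w => instDecidableAnd) w']
      by_cases hcw : c ∈ w' <;> by_cases hdw : d ∈ w' <;>
        simp [hCdef, coefF, Finset.mem_insert, Finset.mem_sdiff, Finset.mem_singleton,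
          hab, Ne.symm hab, Ne.symm hac, Ne.symm had, Ne.symm hbc, Ne.symm hbd, hcw, hdw] <;>
        ring
    calc (∑ w' : Finset τ, Pr1 w' * ∑ x ∈ univ.filter (fun x => x \ {a, b} = w' \ {a, b}),
          (if a ∈ x ∧ b ∈ x then C x else 0))
        = ∑ w' : Finset τ, Pr1 w' *
            (if c ∈ w' then (if d ∈ w' then 0 else 0) else (if d ∈ w' then 0 else γ)) :=
          Finset.sum_congr rfl (fun w' _ => by rw [ev w'])
      _ = S11 * 0 + S10 * 0 + S01 * 0 + S00 * γ := houter 0 0 0 γ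
      _ = m := by rw [hS00A]; linear_combination hγA
  refine ⟨Pr2, ⟨⟨fun w => mul_nonneg (hCnn w) (hνnn _), htot2, ?_⟩, hPr2edge⟩, ?_⟩
  · intro t
    by_cases hta : t = a
    · subst hta; exact hmarg_a
    · by_cases htb : t = b
      · subst htb; exact hmarg_b
      · exact hmarg_t t hta htb
  · have hAr : 1 - (p c + p d - q) = A := by rw [hAdef]; ring
    rw [hAr, hco, hmdef]
lemma coexist_le_bound (p : τ → ℝ) (E : Set (Finset τ)) (a b c d : τ)
    (hacE : ({a, c} : Finset τ) ∈ E) (hdbE : ({d, b} : Finset τ) ∈ E)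
    (Pr : Finset τ → ℝ) (h : IsModel p E Pr) :
    coexistProb Pr {a, b} ≤ min (p a) (min (p b) (1 - (p c + p d - coexistProb Pr {c, d}))) := by
  obtain ⟨⟨hnn, htot, hmarg⟩, hedge⟩ := h
  refine le_min ?_ (le_min ?_ ?_)
  · rw [← hmarg a]
    apply Finset.sum_le_sum_of_subset_of_nonneg
    · intro w hw
      simp only [Finset.mem_filter, Finset.mem_univ, true_and] at hw ⊢
      exact hw (Finset.mem_insert_self a _)
    · intro w _ _
      exact hnn w
  · rw [← hmarg b]
    apply Finset.sum_le_sum_of_subset_of_nonneg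
    · intro w hw
      simp only [Finset.mem_filter, Finset.mem_univ, true_and] at hw ⊢
      exact hw (Finset.mem_insert_of_mem (Finset.mem_singleton_self b))
    · intro w _ _
      exact hnn w
  · have key : coexistProb Pr {a, b} + p c + p d - coexistProb Pr {c, d} ≤ 1 := by
      have hterm : ∀ w : Finset τ,
          (if ({a, b} : Finset τ) ⊆ w then Pr w else 0) + (if c ∈ w then Pr w else 0)
            + (if d ∈ w then Pr w else 0) - (if ({c, d} : Finset τ) ⊆ w then Pr w else 0)
            ≤ Pr w := by
        intro w
        by_cases h0 : Pr w = 0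
        · simp [h0]
        · have hnoedge : ∀ e ∈ E, ¬ e ⊆ w := fun e he hew => h0 (hedge w ⟨e, he, hew⟩)
          have hcd : ({c, d} : Finset τ) ⊆ w ↔ c ∈ w ∧ d ∈ w := by
            simp [Finset.insert_subset_iff]
          by_cases h1 : ({a, b} : Finset τ) ⊆ w
          · have haw : a ∈ w := h1 (Finset.mem_insert_self a _)
            have hbw : b ∈ w := h1 (Finset.mem_insert_of_mem (Finset.mem_singleton_self b))
            have hcw : c ∉ w := fun hc => hnoedge {a, c} hacE
              (Finset.insert_subset_iff.mpr ⟨haw, Finset.singleton_subset_iff.mpr hc⟩)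
            have hdw : d ∉ w := fun hd => hnoedge {d, b} hdbE
              (Finset.insert_subset_iff.mpr ⟨hd, Finset.singleton_subset_iff.mpr hbw⟩)
            simp [h1, hcw, hdw, hcd]
          · by_cases h2 : c ∈ w <;> by_cases h3 : d ∈ w <;>
              simp [h1, h2, h3, hcd] <;> linarith [hnn w]
      calc coexistProb Pr {a, b} + p c + p d - coexistProb Pr {c, d}
          = ∑ w : Finset τ,
              ((if ({a, b} : Finset τ) ⊆ w then Pr w else 0) + (if c ∈ w then Pr w else 0)
                + (if d ∈ w then Pr w else 0) - (if ({c, d} : Finset τ) ⊆ w then Pr w else 0)) := by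
            rw [Finset.sum_sub_distrib, Finset.sum_add_distrib, Finset.sum_add_distrib,
              ← Finset.sum_filter, ← Finset.sum_filter, ← Finset.sum_filter, ← Finset.sum_filter,
              hmarg c, hmarg d]
            unfold coexistProb
            ring
        _ ≤ ∑ w : Finset τ, Pr w := Finset.sum_le_sum (fun w _ => hterm w)
        _ = 1 := htot
    linarith
/-- for the path conflict graph on tuples `u_0, …, u_k` (`k ≥ 2`),
`p^max({u_0, u_k}) = min {p(u_0), p(u_k), 1 − (p(u_1) + p(u_{k−1}) − p^max({u_1, u_{k−1}}))}`. -/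
theorem pmax_path_graph
    (p : τ → ℝ) (hp : ∀ t, 0 ≤ p t ∧ p t ≤ 1)
    (k : ℕ) (hk : 2 ≤ k) (u : Fin (k + 1) → τ)
    (hbij : Function.Bijective u)
    (hcons : Consistent p
      {s : Finset τ | ∃ i : Fin k, s = {u i.castSucc, u i.succ}})
    (q : ℝ)
    (hq : IsGreatest {x : ℝ | ∃ Pr,
        IsModel p {s : Finset τ | ∃ i : Fin k, s = {u i.castSucc, u i.succ}} Pr ∧
        coexistProb Pr {u ⟨1, by omega⟩, u ⟨k - 1, by omega⟩} = x} q) :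
    IsGreatest {x : ℝ | ∃ Pr,
        IsModel p {s : Finset τ | ∃ i : Fin k, s = {u i.castSucc, u i.succ}} Pr ∧
        coexistProb Pr {u ⟨0, by omega⟩, u ⟨k, by omega⟩} = x}
      (min (p (u ⟨0, by omega⟩)) (min (p (u ⟨k, by omega⟩))
        (1 - (p (u ⟨1, by omega⟩) + p (u ⟨k - 1, by omega⟩) - q)))) := by
  have hinj := hbij.injective
  set E : Set (Finset τ) := {s : Finset τ | ∃ i : Fin k, s = {u i.castSucc, u i.succ}} with hEdef
  set a : τ := u ⟨0, by omega⟩ with hadef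
  set b : τ := u ⟨k, by omega⟩ with hbdef
  set c : τ := u ⟨1, by omega⟩ with hcdef
  set d : τ := u ⟨k - 1, by omega⟩ with hddef
  have hne : ∀ (i j : Fin (k + 1)), i.val ≠ j.val → u i ≠ u j := by
    intro i j hij h
    exact hij (congrArg Fin.val (hinj h))
  have hab : a ≠ b := hne _ _ (by simp; omega)
  have hac : a ≠ c := hne _ _ (by simp)
  have had : a ≠ d := hne _ _ (by simp; omega)
  have hbc : b ≠ c := hne _ _ (by simp; omega)
  have hbd : b ≠ d := hne _ _ (by simp; omega)
  have hacE : ({a, c} : Finset τ) ∈ E := by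
    refine ⟨⟨0, by omega⟩, ?_⟩
    have h1 : ((⟨0, by omega⟩ : Fin k)).castSucc = (⟨0, by omega⟩ : Fin (k + 1)) :=
      Fin.ext (by simp)
    have h2 : ((⟨0, by omega⟩ : Fin k)).succ = (⟨1, by omega⟩ : Fin (k + 1)) :=
      Fin.ext (by simp)
    rw [h1, h2]
  have hdbE : ({d, b} : Finset τ) ∈ E := by
    refine ⟨⟨k - 1, by omega⟩, ?_⟩
    have h1 : ((⟨k - 1, by omega⟩ : Fin k)).castSucc = (⟨k - 1, by omega⟩ : Fin (k + 1)) :=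
      Fin.ext (by simp)
    have h2 : ((⟨k - 1, by omega⟩ : Fin k)).succ = (⟨k, by omega⟩ : Fin (k + 1)) :=
      Fin.ext (by simp; omega)
    rw [h1, h2]
  have hEa : ∀ e ∈ E, a ∈ e → e = {a, c} := by
    rintro e ⟨i, rfl⟩ hae
    rcases Finset.mem_insert.mp hae with h | h
    · have hval := congrArg Fin.val (hinj h)
      simp only [Fin.coe_castSucc] at hval
      have h1 : i.castSucc = (⟨0, by omega⟩ : Fin (k + 1)) := Fin.ext (by simp [← hval])
      have h2 : i.succ = (⟨1, by omega⟩ : Fin (k + 1)) := Fin.ext (by simp [Fin.val_succ, ← hval])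
      rw [h1, h2]
    · rw [Finset.mem_singleton] at h
      have hval := congrArg Fin.val (hinj h)
      simp only [Fin.val_succ] at hval
      omega
  have hEb : ∀ e ∈ E, b ∈ e → e = {d, b} := by
    rintro e ⟨i, rfl⟩ hbe
    rcases Finset.mem_insert.mp hbe with h | h
    · have hval := congrArg Fin.val (hinj h)
      simp only [Fin.coe_castSucc] at hval
      have := i.isLt
      omega
    · rw [Finset.mem_singleton] at h
      have hval := congrArg Fin.val (hinj h)
      simp only [Fin.val_succ] at hval
      have h1 : i.castSucc = (⟨k - 1, by omega⟩ : Fin (k + 1)) := Fin.ext (by simp; omega)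
      have h2 : i.succ = (⟨k, by omega⟩ : Fin (k + 1)) := Fin.ext (by simp [Fin.val_succ]; omega)
      rw [h1, h2]
  obtain ⟨Pr1, hPr1, hPr1q⟩ := hq.1
  constructor
  · obtain ⟨Pr2, hPr2, hco⟩ :=
      exists_opt_model p E a b c d hab hac had hbc hbd hEa hEb hacE hdbE Pr1 hPr1
    refine ⟨Pr2, hPr2, ?_⟩
    rw [hco, hPr1q]
  · rintro x ⟨Pr, hPr, rfl⟩
    have h := coexist_le_bound p E a b c d hacE hdbE Pr hPr
    have hy : coexistProb Pr {c, d} ≤ q := hq.2 ⟨Pr, hPr, rfl⟩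
    refine le_trans h (min_le_min (le_refl _) (min_le_min (le_refl _) ?_))
    linarith
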